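/- Let p be a prime number. Let Ω = {α₁,…,α_p,β₁,…,β_p} be a set of 2p distinct points, and consider partial transformations of Ω (equivalently, total maps on Ω ∪ {θ} fixing θ, where θ denotes 'undefined'). Let X_{p,i} be the partial transformation with domain {α_i} sending α_i to β_i, and let W_{p,i} be the partial transformation with domain {β₁,…,β_p} sending β_j to α_{j+i} for each j (subscripts j+i reduced modulo p into {1,…,p}). Let S_p be the semigroup of partial transformations of Ω generated by X_{p,1},…,X_{p,p},W_{p,1},…,W_{p,p}. Then S_p is not strongly Mal'cev nilpotent, but every subsemigroup of S_p generated by at most 2p−1 elements is strongly Mal'cev nilpotent. (This is the key step in proving that the pseudovariety SMN of finite strongly Mal'cev nilpotent semigroups has infinite rank.) -/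

import Mathlib

namespace SMN

variable {S : Type*}

/-- Mal'cev sequences `(λ_n, ρ_n)`; `z k` plays the role of `z_{k+1}`. -/
def lr [Mul S] (x y : S) (z : ℕ → S) : ℕ → S × S
  | 0 => (x, y)
  | n + 1 =>
    let p := lr x y z n
    (p.1 * z n * p.2, p.2 * z n * p.1)

/-- Cyclic shift by `k` in `Fin t`. -/
def cyc {t : ℕ} (i : Fin t) (k : ℕ) : Fin t :=
  ⟨(i.val + k) % t, Nat.mod_lt _ i.pos⟩

/-- Strong Mal'cev sequences `λ_{n,i}`; `z k` plays the role of `z_{k+1}`. -/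
def slam [Mul S] {t : ℕ} (x : Fin t → S) (z : ℕ → S) : ℕ → Fin t → S
  | 0 => x
  | n + 1 =>
    let f := slam x z n
    fun i => (List.range (t - 1)).foldl (fun acc j => acc * z n * f (cyc i (j + 1))) (f i)

/-- A semigroup is Mal'cev nilpotent if for some `n ≥ 1`,
`λ_n = ρ_n` for all `x, y ∈ S` and `z₁, …, z_n ∈ S¹`. -/
def MalcevNilpotent (S : Type*) [Semigroup S] : Prop :=
  ∃ n : ℕ, 1 ≤ n ∧ ∀ (x y : S) (z : ℕ → WithOne S),
    (lr (x : WithOne S) (y : WithOne S) z n).1 = (lr (x : WithOne S) (y : WithOne S) z n).2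

/-- Strong Mal'cev nilpotency at level `n`. -/
def SMNAt (S : Type*) [Semigroup S] (n : ℕ) : Prop :=
  ∀ t : ℕ, 2 ≤ t → ∀ (x : Fin t → S) (z : ℕ → WithOne S) (i j : Fin t),
    slam (fun k => (x k : WithOne S)) z n i = slam (fun k => (x k : WithOne S)) z n j

/-- A semigroup is strongly Mal'cev nilpotent if for some `n ≥ 1`, for every `t ≥ 2`,
`λ_{n,1} = ⋯ = λ_{n,t}` for all `x₁, …, x_t ∈ S` and `z₁, …, z_n ∈ S¹`. -/
def StronglyMalcevNilpotent (S : Type*) [Semigroup S] : Prop :=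
  ∃ n : ℕ, 1 ≤ n ∧ SMNAt S n

/-- `y` is an inverse of `x`. -/
def IsInverseOf [Semigroup S] (y x : S) : Prop := x * y * x = x ∧ y * x * y = y

/-- A block group: every element has at most one inverse. -/
def BlockGroup (S : Type*) [Semigroup S] : Prop :=
  ∀ x y₁ y₂ : S, IsInverseOf y₁ x → IsInverseOf y₂ x → y₁ = y₂

/-- All subgroups (subsemigroups which are groups) of `S` are nilpotent. -/
def AllSubgroupsNilpotent (S : Type*) [Semigroup S] : Prop :=
  ∀ (G : Type) [Group G], ∀ φ : G → S,
    (∀ a b : G, φ (a * b) = φ a * φ b) → Function.Injective φ → Group.IsNilpotent G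

/-- All subgroups (subsemigroups which are groups) of `S` are trivial. -/
def AllSubgroupsTrivial (S : Type*) [Semigroup S] : Prop :=
  ∀ (G : Type) [Group G], ∀ φ : G → S,
    (∀ a b : G, φ (a * b) = φ a * φ b) → Function.Injective φ → ∀ g : G, g = 1

end SMN

namespace SMN


/-- Partial transformations of `Ω`, composed left to right
(`f * g` means: first `f`, then `g`; `none` plays the role of `θ`). -/
def PT (Ω : Type*) := Ω → Option Ω

instance (Ω : Type*) : Mul (PT Ω) := ⟨fun f g x => (f x).bind g⟩

instance (Ω : Type*) : Semigroup (PT Ω) where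
  mul_assoc f g h := by
    funext x
    change ((f x).bind g).bind h = (f x).bind fun a => (g a).bind h
    cases f x <;> rfl

/-- The points: `Sum.inl i` is `α_{i+1}` and `Sum.inr j` is `β_{j+1}`. -/
abbrev Pts (p : ℕ) := Fin p ⊕ Fin p

/-- `X_{p,i}`: the partial bijection sending `α_i` to `β_i` (0-indexed here). -/
def Xgen (p : ℕ) (i : Fin p) : PT (Pts p) :=
  fun x => if x = Sum.inl i then some (Sum.inr i) else none

/-- `W_{p,i}`: the partial bijection sending `β_j` to `α_{j+i}` (subscripts mod `p`);
here `i : Fin p` stands for the 1-based index `i+1`, so `inr j ↦ inl (j + i + 1 mod p)`. -/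
def Wgen (p : ℕ) (i : Fin p) : PT (Pts p) :=
  fun x =>
    match x with
    | Sum.inr j => some (Sum.inl ⟨(j.val + i.val + 1) % p, Nat.mod_lt _ j.pos⟩)
    | Sum.inl _ => none

/-- The semigroup `S_p` generated by the `X_{p,i}` and `W_{p,i}`. -/
def Sp (p : ℕ) : Subsemigroup (PT (Pts p)) :=
  Subsemigroup.closure ({f | ∃ i, f = Xgen p i} ∪ {f | ∃ i, f = Wgen p i})


set_option linter.unusedSectionVars false
set_option linter.unusedVariables false
set_option maxHeartbeats 1000000

open Fin.NatCast Fin.CommRing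

section PTbasic
variable {Ω : Type*}

theorem PT.mul_apply (f g : PT Ω) (x : Ω) : (f * g) x = (f x).bind g := rfl

instance : One (PT Ω) := ⟨fun x => some x⟩

theorem PT.one_apply (x : Ω) : (1 : PT Ω) x = some x := rfl

instance : Monoid (PT Ω) :=
  { (inferInstance : Semigroup (PT Ω)), (inferInstance : One (PT Ω)) with
    one_mul := fun f => rfl
    mul_one := fun f => by
      funext x
      show (f x).bind some = f x
      cases f x <;> rfl }

def pt0 : PT Ω := fun _ => none

theorem pt0_mul (f : PT Ω) : pt0 * f = pt0 := rfl

theorem mul_pt0 (f : PT Ω) : f * pt0 = pt0 := by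
  funext x
  show (f x).bind _ = none
  cases f x <;> rfl

variable [DecidableEq Ω]

def pte (a b : Ω) : PT Ω := fun x => if x = a then some b else none

theorem pte_apply_self (a b : Ω) : pte a b a = some b := if_pos rfl

theorem pte_apply_ne {x a : Ω} (b : Ω) (h : x ≠ a) : pte a b x = none := if_neg h

theorem pte_ne_pt0 (a b : Ω) : pte a b ≠ pt0 := by
  intro h
  have := congrFun h a
  rw [pte_apply_self] at this
  exact Option.some_ne_none _ this

theorem pte_mul_some {g : PT Ω} {b d : Ω} (a : Ω) (h : g b = some d) :
    pte a b * g = pte a d := by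
  funext x
  show (pte a b x).bind g = pte a d x
  unfold pte
  by_cases hx : x = a <;> simp [hx, h, Option.bind]

theorem pte_mul_none {g : PT Ω} {b : Ω} (a : Ω) (h : g b = none) :
    pte a b * g = pt0 := by
  funext x
  show (pte a b x).bind g = none
  unfold pte
  by_cases hx : x = a <;> simp [hx, h, Option.bind]

def IsR1 (f : PT Ω) : Prop := ∀ x y, f x ≠ none → f y ≠ none → x = y

theorem isR1_pt0 : IsR1 (pt0 : PT Ω) := fun x _ hx _ => absurd rfl hx

theorem isR1_pte (a b : Ω) : IsR1 (pte a b) := by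
  intro x y hx hy
  by_cases h1 : x = a
  · by_cases h2 : y = a
    · rw [h1, h2]
    · exact absurd (pte_apply_ne b h2) hy
  · exact absurd (pte_apply_ne b h1) hx

theorem IsR1.mul_right {f : PT Ω} (h : IsR1 f) (g : PT Ω) : IsR1 (f * g) := by
  intro x y hx hy
  rw [PT.mul_apply] at hx hy
  apply h x y
  · intro h0; rw [h0] at hx; exact hx rfl
  · intro h0; rw [h0] at hy; exact hy rfl

theorem isR1_ne_pt0 {f : PT Ω} (h1 : IsR1 f) (h0 : f ≠ pt0) : ∃ a b, f = pte a b := by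
  have : ∃ x, f x ≠ none := by
    by_contra h
    push_neg at h
    exact h0 (funext fun x => by simp [h x, pt0])
  obtain ⟨a, ha⟩ := this
  obtain ⟨b, hb⟩ := Option.ne_none_iff_exists'.mp ha
  refine ⟨a, b, funext fun y => ?_⟩
  by_cases hy : y = a
  · rw [hy, hb, pte_apply_self]
  · rw [pte_apply_ne b hy]
    by_contra hne
    exact hy (h1 y a hne ha)

end PTbasic

section cycLemmas

variable {t : ℕ} [NeZero t]

theorem cyc_eq_add (i : Fin t) (k : ℕ) : cyc i k = i + (k : Fin t) := by
  apply Fin.ext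
  show (i.val + k) % t = (i + (k : Fin t)).val
  rw [Fin.add_def, Fin.val_natCast]
  show _ = (i.val + k % t) % t
  exact (Nat.add_mod_mod _ _ _).symm

theorem fin_cast_sub_one (ht : 1 ≤ t) : ((t - 1 : ℕ) : Fin t) = -1 := by
  have h0 : ((t : ℕ) : Fin t) = 0 := by
    apply Fin.ext
    simp [Fin.val_natCast]
  rw [Nat.cast_sub ht, h0, Nat.cast_one]
  ring

theorem const_of_rot {γ : Type*} (f : Fin t → γ) (h : ∀ m, f (m - 1) = f m) :
    ∀ m m', f m = f m' := by
  have key : ∀ (k : ℕ) (m : Fin t), f (m - (k : Fin t)) = f m := by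
    intro k
    induction k with
    | zero => simp
    | succ k ih =>
      intro m
      have h2 : m - ((k + 1 : ℕ) : Fin t) = (m - (k : Fin t)) - 1 := by
        push_cast
        ring
      rw [h2, h (m - (k : Fin t)), ih]
  intro m m'
  have := key (m - m').val m
  rw [Fin.cast_val_eq_self, sub_sub_cancel] at this
  exact this.symm

theorem drift_iter {R : Type*} [AddCommGroup R] (f : Fin t → R) (δ : R) (sm : ℕ → R)
    (hsm0 : sm 0 = 0) (hsm : ∀ k, sm (k+1) = sm k + δ)
    (h : ∀ m, f (m - 1) = f m + δ) :
    ∀ (k : ℕ) (m : Fin t), f (m - (k : Fin t)) = f m + sm k := by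
  intro k
  induction k with
  | zero => simp [hsm0]
  | succ k ih =>
    intro m
    have h2 : m - ((k + 1 : ℕ) : Fin t) = (m - (k : Fin t)) - 1 := by
      push_cast
      ring
    rw [h2, h (m - (k : Fin t)), ih, hsm]
    abel

end cycLemmas

section slamLemmas

variable {A B : Type*} [Mul A] [Mul B] {t : ℕ}

theorem slam_succ (x : Fin t → A) (z : ℕ → A) (n : ℕ) (i : Fin t) :
    slam x z (n+1) i = (List.range (t-1)).foldl
      (fun acc j => acc * z n * slam x z n (cyc i (j + 1))) (slam x z n i) := rfl

theorem foldl_hom (F : A → B) (hF : ∀ x y, F (x*y) = F x * F y) (z : A) (G : ℕ → A) :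
    ∀ (l : List ℕ) (acc : A),
      F (l.foldl (fun a j => a * z * G j) acc)
        = l.foldl (fun a j => a * F z * F (G j)) (F acc)
  | [], acc => rfl
  | j :: l, acc => by
    rw [List.foldl_cons, List.foldl_cons, foldl_hom F hF z G l, hF, hF]

theorem slam_hom (F : A → B) (hF : ∀ x y, F (x*y) = F x * F y) (x : Fin t → A) (z : ℕ → A) :
    ∀ n (i : Fin t), F (slam x z n i)
      = slam (fun k => F (x k)) (fun k => F (z k)) n i := by
  intro n
  induction n with
  | zero => intro i; rfl
  | succ n ih =>
    intro i
    rw [slam_succ, slam_succ, foldl_hom F hF]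
    have h1 : (fun (a : B) (j : ℕ) => a * F (z n) * F (slam x z n (cyc i (j+1))))
        = (fun (a : B) (j : ℕ) => a * (fun k => F (z k)) n *
            slam (fun k => F (x k)) (fun k => F (z k)) n (cyc i (j+1))) := by
      funext a j
      rw [ih]
    rw [h1, ih]

theorem foldl_inv {M : Type*} [Mul M] {P : M → Prop} (z : M) (G : ℕ → M)
    (hstep : ∀ acc j, P acc → P (acc * z * G j)) :
    ∀ (l : List ℕ) (acc : M), P acc → P (l.foldl (fun a j => a * z * G j) acc)
  | [], acc, h => h
  | j :: l, acc, h => by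
    rw [List.foldl_cons]
    exact foldl_inv z G hstep l _ (hstep acc j h)

theorem slam_const_of_const {x : Fin t → A} {z : ℕ → A} {n : ℕ}
    (h : ∀ i j, slam x z n i = slam x z n j) :
    ∀ m, n ≤ m → ∀ i j, slam x z m i = slam x z m j := by
  intro m hm
  induction m, hm using Nat.le_induction with
  | base => exact h
  | succ m hm ih =>
    intro i j
    rw [slam_succ, slam_succ]
    have h1 : (fun (acc : A) (jj : ℕ) => acc * z m * slam x z m (cyc i (jj+1)))
        = (fun (acc : A) (jj : ℕ) => acc * z m * slam x z m (cyc j (jj+1))) := by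
      funext acc jj
      rw [ih (cyc i (jj+1)) (cyc j (jj+1))]
    rw [h1, ih i j]

end slamLemmas

section zmodTools

variable {p : ℕ}

def fz (x : Fin p) : ZMod p := (x.val : ZMod p)

theorem fz_inj {x y : Fin p} (h : fz x = fz y) : x = y := by
  have hx := ZMod.val_cast_of_lt x.2
  have hy := ZMod.val_cast_of_lt y.2
  apply Fin.ext
  rw [← hx, ← hy]
  unfold fz at h
  rw [h]

theorem fz_mk (hp : 0 < p) (a : ℕ) :
    fz (⟨a % p, Nat.mod_lt _ hp⟩ : Fin p) = (a : ZMod p) := ZMod.natCast_mod a p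

end zmodTools

section genLemmas

variable {p : ℕ}

theorem wgen_inl (c u : Fin p) : Wgen p c (Sum.inl u) = none := rfl

theorem wgen_inr (c j : Fin p) :
    Wgen p c (Sum.inr j)
      = some (Sum.inl ⟨(j.val + c.val + 1) % p, Nat.mod_lt _ j.pos⟩) := rfl

theorem xgen_eq_pte (i : Fin p) : Xgen p i = pte (Sum.inl i) (Sum.inr i) := rfl

theorem wgen_inj (c : Fin p) {x y : Pts p} (hx : Wgen p c x ≠ none)
    (hxy : Wgen p c x = Wgen p c y) : x = y := by
  match x, y with
  | Sum.inl u, _ => exact absurd rfl hx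
  | Sum.inr j, Sum.inl u => rw [wgen_inr, wgen_inl] at hxy; exact nomatch hxy
  | Sum.inr j, Sum.inr j' =>
    rw [wgen_inr, wgen_inr] at hxy
    have h2 := Sum.inl.inj (Option.some.inj hxy)
    have h3 := congrArg fz h2
    rw [fz_mk j.pos, fz_mk j.pos] at h3
    push_cast at h3
    have : fz j = fz j' := by
      unfold fz
      linear_combination h3
    rw [fz_inj this]

def SpSet (p : ℕ) : Set (PT (Pts p)) := {f | IsR1 f ∨ ∃ c, f = Wgen p c}

theorem spset_mul_isR1 {f g : PT (Pts p)} (hf : f ∈ SpSet p) (hg : g ∈ SpSet p) :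
    IsR1 (f * g) := by
  rcases hf with hf | ⟨c, rfl⟩
  · exact hf.mul_right g
  · rcases hg with hg | ⟨d, rfl⟩
    · intro x y hx hy
      rw [PT.mul_apply] at hx hy
      cases hwx : Wgen p c x with
      | none => rw [hwx] at hx; exact absurd rfl hx
      | some u =>
        cases hwy : Wgen p c y with
        | none => rw [hwy] at hy; exact absurd rfl hy
        | some u' =>
          rw [hwx] at hx
          rw [hwy] at hy
          have huu : u = u' := hg u u' hx hy
          apply wgen_inj c (x := x) (y := y)
          · rw [hwx]; simp
          · rw [hwx, hwy, huu]
    · intro x y hx hy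
      exfalso
      rw [PT.mul_apply] at hx
      match x with
      | Sum.inl u => exact hx rfl
      | Sum.inr j => rw [wgen_inr] at hx; exact hx rfl

theorem spset_mul {f g : PT (Pts p)} (hf : f ∈ SpSet p) (hg : g ∈ SpSet p) :
    f * g ∈ SpSet p := Or.inl (spset_mul_isR1 hf hg)

def SpSetSub (p : ℕ) : Subsemigroup (PT (Pts p)) :=
  { carrier := SpSet p
    mul_mem' := fun hf hg => spset_mul hf hg }

theorem isR1_xgen (i : Fin p) : IsR1 (Xgen p i) := by
  rw [xgen_eq_pte]; exact isR1_pte _ _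

theorem sp_le_spset : Sp p ≤ SpSetSub p := by
  apply Subsemigroup.closure_le.mpr
  rintro f (⟨i, rfl⟩ | ⟨i, rfl⟩)
  · exact Or.inl (isR1_xgen i)
  · exact Or.inr ⟨i, rfl⟩

theorem xgen_mem (i : Fin p) : Xgen p i ∈ Sp p :=
  Subsemigroup.subset_closure (Or.inl ⟨i, rfl⟩)

theorem wgen_mem (i : Fin p) : Wgen p i ∈ Sp p :=
  Subsemigroup.subset_closure (Or.inr ⟨i, rfl⟩)

theorem wgen_not_isR1 (hp2 : 2 ≤ p) (c : Fin p) : ¬ IsR1 (Wgen p c) := by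
  intro h
  have h0 : Wgen p c (Sum.inr ⟨0, by omega⟩) ≠ none := by rw [wgen_inr]; simp
  have h1 : Wgen p c (Sum.inr ⟨1, by omega⟩) ≠ none := by rw [wgen_inr]; simp
  have := h _ _ h0 h1
  simp only [Sum.inr.injEq, Fin.mk.injEq] at this
  exact absurd this (by omega)

end genLemmas

section chainLemmas

variable {Ω : Type*} [DecidableEq Ω] {t : ℕ} [NeZero t]

theorem foldl_pt0 (z : PT Ω) (G : ℕ → PT Ω) (l : List ℕ) :
    l.foldl (fun a j => a * z * G j) pt0 = pt0 := by
  apply foldl_inv (P := fun f => f = pt0)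
  · intro acc j h
    rw [h, pt0_mul, pt0_mul]
  · rfl

theorem foldl_hit_pt0 (z : PT Ω) (G : ℕ → PT Ω) :
    ∀ (l : List ℕ) (acc : PT Ω), (∃ j ∈ l, G j = pt0) →
      l.foldl (fun a j => a * z * G j) acc = pt0
  | [], acc, h => by simp at h
  | j₀ :: l, acc, h => by
    rw [List.foldl_cons]
    by_cases hj : G j₀ = pt0
    · rw [hj, mul_pt0]
      exact foldl_pt0 z G l
    · obtain ⟨j, hjl, hjz⟩ := h
      rcases List.mem_cons.mp hjl with rfl | hjl
      · exact absurd hjz hj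
      · exact foldl_hit_pt0 z G l _ ⟨j, hjl, hjz⟩

theorem chain_eq (F : Fin t → PT Ω) (ζ : PT Ω) (a b : Fin t → Ω)
    (hF : ∀ m, F m = pte (a m) (b m))
    (hC : ∀ m, ζ (b m) = some (a (m + 1))) (i : Fin t) :
    (List.range (t-1)).foldl (fun acc j => acc * ζ * F (cyc i (j+1))) (F i)
      = pte (a i) (b (i + ((t-1 : ℕ) : Fin t))) := by
  suffices h : ∀ k : ℕ, (List.range k).foldl (fun acc j => acc * ζ * F (cyc i (j+1))) (F i)
      = pte (a i) (b (i + (k : Fin t))) from h (t-1)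
  intro k
  induction k with
  | zero => rw [List.range_zero, List.foldl_nil, hF, Nat.cast_zero, add_zero]
  | succ k ih =>
    rw [List.range_succ, List.foldl_append, ih, List.foldl_cons, List.foldl_nil]
    rw [pte_mul_some _ (hC (i + (k : Fin t)))]
    rw [cyc_eq_add, hF]
    have hcast : i + ((k + 1 : ℕ) : Fin t) = i + (k : Fin t) + 1 := by
      push_cast
      ring
    rw [hcast]
    exact pte_mul_some _ (pte_apply_self _ _)

theorem chain_bad (ht : 2 ≤ t) (F : Fin t → PT Ω) (ζ : PT Ω) (a b : Fin t → Ω)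
    (hF : ∀ m, F m = pte (a m) (b m)) (m₀ : Fin t)
    (hbad : ζ (b m₀) ≠ some (a (m₀ + 1))) :
    (List.range (t-1)).foldl (fun acc j => acc * ζ * F (cyc m₀ (j+1))) (F m₀) = pt0 := by
  obtain ⟨s, hs⟩ : ∃ s, t - 1 = s + 1 := ⟨t - 2, by omega⟩
  rw [hs, List.range_succ_eq_map, List.foldl_cons]
  have h1 : F m₀ * ζ * F (cyc m₀ (0+1)) = pt0 := by
    rw [hF m₀, cyc_eq_add, hF]
    have : m₀ + ((0 + 1 : ℕ) : Fin t) = m₀ + 1 := by push_cast; ring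
    rw [this]
    cases hz : ζ (b m₀) with
    | none => rw [pte_mul_none _ hz, pt0_mul]
    | some w =>
      rw [pte_mul_some _ hz]
      apply pte_mul_none
      apply pte_apply_ne
      intro hw
      rw [hw] at hz
      exact hbad hz
  rw [h1]
  exact foldl_pt0 _ _ _

theorem slam_zero_prop (x : Fin t → PT Ω) (z : ℕ → PT Ω) (n : ℕ) (i₀ : Fin t)
    (h : slam x z n i₀ = pt0) (i : Fin t) : slam x z (n+1) i = pt0 := by
  rw [slam_succ]
  by_cases hi : i = i₀
  · subst hi
    rw [h]
    exact foldl_pt0 _ _ _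
  · apply foldl_hit_pt0
    refine ⟨(i₀ - i).val - 1, ?_, ?_⟩
    · apply List.mem_range.mpr
      have h1 : (i₀ - i).val ≠ 0 := by
        intro h0
        exact hi (sub_eq_zero.mp (Fin.ext h0 : i₀ - i = 0)).symm
      have h2 : (i₀ - i).val < t := (i₀ - i).2
      omega
    · have h1 : (i₀ - i).val ≠ 0 := by
        intro h0
        exact hi (sub_eq_zero.mp (Fin.ext h0 : i₀ - i = 0)).symm
      have h3 : (i₀ - i).val - 1 + 1 = (i₀ - i).val := by omega
      rw [h3, cyc_eq_add, Fin.cast_val_eq_self]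
      have : i + (i₀ - i) = i₀ := by abel
      rw [this, h]

end chainLemmas

section part1

theorem part1_slam (p : ℕ) (hp : p.Prime) :
    ∀ (n : ℕ) (i : Fin p),
      slam (fun m => Xgen p m) (fun k => Wgen p ⟨k % p, Nat.mod_lt _ hp.pos⟩) n i
        = pte (Sum.inl i) (Sum.inr ⟨(i.val + n * (p - 1)) % p, Nat.mod_lt _ hp.pos⟩) := by
  haveI : NeZero p := ⟨hp.pos.ne'⟩
  have hfz : ∀ (n : ℕ) (i : Fin p),
      fz (⟨(i.val + n * (p - 1)) % p, Nat.mod_lt _ hp.pos⟩ : Fin p) = fz i - n := by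
    intro n i
    rw [fz_mk hp.pos]
    push_cast [Nat.cast_sub hp.pos]
    rw [ZMod.natCast_self]
    unfold fz
    ring
  intro n
  induction n with
  | zero =>
    intro i
    show Xgen p i = _
    rw [xgen_eq_pte]
    have he : (⟨(i.val + 0 * (p - 1)) % p, Nat.mod_lt _ hp.pos⟩ : Fin p) = i := by
      apply fz_inj
      rw [hfz]
      push_cast
      ring
    rw [he]
  | succ n ih =>
    intro i
    rw [slam_succ]
    rw [chain_eq (slam _ _ n) _ (fun m => Sum.inl m)
      (fun m => Sum.inr ⟨(m.val + n * (p - 1)) % p, Nat.mod_lt _ hp.pos⟩) ih ?_ i]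
    · have he : (⟨((i + ((p-1:ℕ) : Fin p)).val + n * (p-1)) % p, Nat.mod_lt _ hp.pos⟩ : Fin p)
          = (⟨(i.val + (n+1) * (p-1)) % p, Nat.mod_lt _ hp.pos⟩ : Fin p) := by
        apply fz_inj
        rw [hfz n (i + ((p-1:ℕ) : Fin p)), hfz (n+1) i]
        have hcast : fz (i + ((p-1:ℕ) : Fin p)) = fz i - 1 := by
          unfold fz
          rw [Fin.add_def, ZMod.natCast_mod]
          push_cast [Fin.val_natCast]
          rw [ZMod.natCast_mod]
          push_cast [Nat.cast_sub hp.pos]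
          rw [ZMod.natCast_self]
          ring
        rw [hcast]
        push_cast
        ring
      rw [he]
    · intro m
      rw [wgen_inr]
      have he : (⟨((⟨(m.val + n * (p - 1)) % p, Nat.mod_lt _ hp.pos⟩ : Fin p).val
            + (⟨n % p, Nat.mod_lt _ hp.pos⟩ : Fin p).val + 1) % p,
              Nat.mod_lt _ hp.pos⟩ : Fin p) = m + 1 := by
        apply fz_inj
        rw [fz_mk hp.pos]
        push_cast
        rw [ZMod.natCast_mod, ZMod.natCast_mod]
        have h2 : fz (m+1) = fz m + 1 := by
          unfold fz
          rw [Fin.add_def, ZMod.natCast_mod, Nat.cast_add, Fin.val_one', ZMod.natCast_mod]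
          push_cast
          ring
        have h3 : ((m.val + n * (p - 1) : ℕ) : ZMod p) = fz m - n := by
          push_cast [Nat.cast_sub hp.pos]
          rw [ZMod.natCast_self]
          unfold fz
          ring
        rw [h3, h2]
        ring
      rw [he]

end part1

section core

theorem core (p : ℕ) (hp : p.Prime) {t : ℕ} (ht : 2 ≤ t)
    (T : Subsemigroup (PT (Pts p))) (hTsp : ∀ f ∈ T, f ∈ SpSet p)
    (ξ : Fin t → PT (Pts p)) (hξ : ∀ k, ξ k ∈ T)
    (ζ : ℕ → PT (Pts p)) (hζ : ∀ k, ζ k = 1 ∨ ζ k ∈ T)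
    (hbig : ¬ ((∀ u : Fin p, ∃ f ∈ T, f (Sum.inl u) ≠ none) ∧
               ∃ c : Fin p → Fin p, Function.Injective c ∧ ∀ k, Wgen p (c k) ∈ T)) :
    ∀ i j, slam ξ ζ (p+4) i = slam ξ ζ (p+4) j := by
  haveI : NeZero t := ⟨by omega⟩
  haveI : NeZero p := ⟨hp.pos.ne'⟩
  haveI : Fact p.Prime := ⟨hp⟩
  have hp2 : 2 ≤ p := hp.two_le
  set N := p + 4 with hN
  suffices hsuf : ∃ n, n ≤ N ∧ ∀ i j, slam ξ ζ n i = slam ξ ζ n j by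
    obtain ⟨n, hn, hc⟩ := hsuf
    exact slam_const_of_const hc N hn
  by_contra hcon
  push_neg at hcon
  -- hcon : ∀ n ≤ N, ∃ i j, slam ξ ζ n i ≠ slam ξ ζ n j
  have hmem : ∀ n i, slam ξ ζ n i ∈ T := by
    intro n
    induction n with
    | zero => exact fun i => hξ i
    | succ n ih =>
      intro i
      rw [slam_succ]
      apply foldl_inv (P := fun f => f ∈ T)
      · intro acc j ha
        rcases hζ n with h1 | hT
        · rw [h1, mul_one]
          exact T.mul_mem ha (ih _)
        · exact T.mul_mem (T.mul_mem ha hT) (ih _)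
      · exact ih i
  have hnz : ∀ n, n < N → ∀ i, slam ξ ζ n i ≠ pt0 := by
    intro n hn i h0
    obtain ⟨i', j', hne⟩ := hcon (n+1) (by omega)
    exact hne ((slam_zero_prop ξ ζ n i h0 i').trans (slam_zero_prop ξ ζ n i h0 j').symm)
  have hR1 : ∀ i, IsR1 (slam ξ ζ 1 i) := by
    intro i
    rw [slam_succ]
    obtain ⟨s, hs⟩ : ∃ s, t - 1 = s + 1 := ⟨t - 2, by omega⟩
    rw [hs, List.range_succ_eq_map, List.foldl_cons]
    apply foldl_inv (P := IsR1)
    · intro acc j ha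
      exact (ha.mul_right _).mul_right _
    · show IsR1 (slam ξ ζ 0 i * ζ 0 * slam ξ ζ 0 (cyc i (0+1)))
      rcases hζ 0 with h1 | hT
      · rw [h1, mul_one]
        exact spset_mul_isR1 (hTsp _ (hξ i)) (hTsp _ (hξ _))
      · exact (spset_mul_isR1 (hTsp _ (hξ i)) (hTsp _ hT)).mul_right _
  have habe : ∀ i, ∃ ab : Pts p × Pts p, slam ξ ζ 1 i = pte ab.1 ab.2 := by
    intro i
    obtain ⟨a, b, hab⟩ := isR1_ne_pt0 (hR1 i) (hnz 1 (by omega) i)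
    exact ⟨(a, b), hab⟩
  choose ab hab using habe
  set a : Fin t → Pts p := fun i => (ab i).1 with ha_def
  set b : Fin t → Pts p := fun i => (ab i).2 with hb_def
  -- level formulas
  have hH : ∀ n, 1 ≤ n → n ≤ N - 1 →
      ∀ i, slam ξ ζ n i = pte (a i) (b (i + (((n-1)*(t-1) : ℕ) : Fin t))) := by
    intro n h1
    induction n, h1 using Nat.le_induction with
    | base =>
      intro _ i
      have : (((1-1)*(t-1) : ℕ) : Fin t) = 0 := by norm_num
      rw [this, add_zero]
      exact hab i
    | succ n h1 ih =>
      intro h2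
      have hHn := ih (by omega)
      by_cases hCn : ∀ m, ζ n (b (m + (((n-1)*(t-1) : ℕ) : Fin t))) = some (a (m + 1))
      · intro i
        rw [slam_succ]
        rw [chain_eq (slam ξ ζ n) (ζ n) a
          (fun m => b (m + (((n-1)*(t-1) : ℕ) : Fin t))) hHn hCn i]
        have hidx : i + (((t-1) : ℕ) : Fin t) + (((n-1)*(t-1) : ℕ) : Fin t)
            = i + (((n+1-1)*(t-1) : ℕ) : Fin t) := by
          have hn' : (n+1-1) = (n-1) + 1 := by omega
          rw [hn', Nat.cast_mul, Nat.cast_mul, fin_cast_sub_one (by omega), Nat.cast_add]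
          push_cast
          ring
        rw [hidx]
      · exfalso
        push_neg at hCn
        obtain ⟨m₀, hm₀⟩ := hCn
        apply hnz (n+1) (by omega) m₀
        rw [slam_succ]
        exact chain_bad ht (slam ξ ζ n) (ζ n) a
          (fun m => b (m + (((n-1)*(t-1) : ℕ) : Fin t))) hHn m₀ hm₀
  -- conditions
  have hC : ∀ n, 1 ≤ n → n ≤ N - 2 →
      ∀ m, ζ n (b (m + (((n-1)*(t-1) : ℕ) : Fin t))) = some (a (m + 1)) := by
    intro n h1 h2
    by_contra hc
    push_neg at hc
    obtain ⟨m₀, hm₀⟩ := hc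
    have hbadz : slam ξ ζ (n+1) m₀ = pt0 := by
      rw [slam_succ]
      exact chain_bad ht (slam ξ ζ n) (ζ n) a _ (hH n h1 (by omega)) m₀ hm₀
    exact hnz (n+1) (by omega) m₀ hbadz
  -- nonconstancy at level 1
  obtain ⟨i₁, j₁, hne1⟩ := hcon 1 (by omega)
  -- b is nonconstant
  have hbnc : ∃ m m', b m ≠ b m' := by
    by_contra hbc
    push_neg at hbc
    have hac : ∀ m m', a m = a m' := by
      intro m m'
      have e1 := hC 1 (by omega) (by omega) (m - 1)
      have e2 := hC 1 (by omega) (by omega) (m' - 1)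
      have hz : (((1-1)*(t-1) : ℕ) : Fin t) = 0 := by norm_num
      rw [hz, add_zero] at e1 e2
      rw [hbc (m - 1) (m' - 1)] at e1
      have := Option.some.inj (e1.symm.trans e2)
      rwa [sub_add_cancel, sub_add_cancel] at this
    exact hne1 (by
      rw [hab i₁, hab j₁, show (ab i₁).1 = (ab j₁).1 from hac i₁ j₁,
        show (ab i₁).2 = (ab j₁).2 from hbc i₁ j₁])
  obtain ⟨m₁, m₂, hbm⟩ := hbnc
  -- each relevant ζ n is 1 or a Wgen in T
  have hζW : ∀ n, 1 ≤ n → n ≤ N - 2 →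
      ζ n = 1 ∨ ∃ c, ζ n = Wgen p c ∧ Wgen p c ∈ T := by
    intro n h1 h2
    rcases hζ n with h | hT
    · exact Or.inl h
    · right
      rcases hTsp _ hT with hr1 | ⟨c, hc⟩
      · exfalso
        have e1 := hC n h1 h2 (m₁ - (((n-1)*(t-1) : ℕ) : Fin t))
        have e2 := hC n h1 h2 (m₂ - (((n-1)*(t-1) : ℕ) : Fin t))
        rw [sub_add_cancel] at e1 e2
        exact hbm (hr1 _ _ (by rw [e1]; simp) (by rw [e2]; simp))
      · exact ⟨c, hc, hc ▸ hT⟩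
  by_cases hWex : ∃ n, (1 ≤ n ∧ n ≤ N - 2) ∧ ∃ c, ζ n = Wgen p c
  case neg =>
    push_neg at hWex
    have hone : ∀ n, 1 ≤ n → n ≤ N - 2 → ζ n = 1 := by
      intro n h1 h2
      rcases hζW n h1 h2 with h | ⟨c, hcc, _⟩
      · exact h
      · exact absurd hcc (hWex n ⟨h1, h2⟩ c)
    have hrot : ∀ m : Fin t, b (m - 1) = b m := by
      intro m
      have e1 := hC 1 (by omega) (by omega) m
      have e2 := hC 2 (by omega) (by omega) m
      rw [hone 1 (by omega) (by omega), PT.one_apply] at e1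
      rw [hone 2 (by omega) (by omega), PT.one_apply] at e2
      have h01 : (((1-1)*(t-1) : ℕ) : Fin t) = 0 := by norm_num
      have h02 : (((2-1)*(t-1) : ℕ) : Fin t) = -1 := by
        have he : ((2-1)*(t-1) : ℕ) = t - 1 := by omega
        rw [he]
        exact fin_cast_sub_one (by omega)
      rw [h01, add_zero] at e1
      rw [h02] at e2
      have h3 := Option.some.inj (e2.trans e1.symm)
      rwa [← sub_eq_add_neg] at h3
    exact hbm (const_of_rot b hrot m₁ m₂)
  obtain ⟨n₀, ⟨hn₀1, hn₀2⟩, c₀, hc₀⟩ := hWex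
  have hA : ∀ m : Fin t, ∃ u, a m = Sum.inl u := by
    intro m
    have e := hC n₀ hn₀1 hn₀2 (m - 1)
    rw [hc₀, sub_add_cancel] at e
    cases hx : b (m - 1 + (((n₀-1)*(t-1) : ℕ) : Fin t)) with
    | inl u => rw [hx, wgen_inl] at e; exact nomatch e
    | inr j => rw [hx, wgen_inr] at e; exact ⟨_, (Option.some.inj e).symm⟩
  have hB : ∀ m : Fin t, ∃ j, b m = Sum.inr j := by
    intro m
    have e := hC n₀ hn₀1 hn₀2 (m - (((n₀-1)*(t-1) : ℕ) : Fin t))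
    rw [hc₀, sub_add_cancel] at e
    cases hx : b m with
    | inl u => rw [hx, wgen_inl] at e; exact nomatch e
    | inr j => exact ⟨j, rfl⟩
  have hallW : ∀ n, 1 ≤ n → n ≤ N - 2 → ∃ c, ζ n = Wgen p c ∧ Wgen p c ∈ T := by
    intro n h1 h2
    rcases hζW n h1 h2 with hone | h
    · exfalso
      have e := hC n h1 h2 (m₁ - (((n-1)*(t-1) : ℕ) : Fin t))
      rw [hone, PT.one_apply, sub_add_cancel] at e
      obtain ⟨u, hu⟩ := hA (m₁ - (((n-1)*(t-1) : ℕ) : Fin t) + 1)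
      obtain ⟨j, hj⟩ := hB m₁
      rw [hj, hu] at e
      exact nomatch (Option.some.inj e)
    · exact h
  have hcex : ∀ n : ℕ, ∃ cn : Fin p, (1 ≤ n → n ≤ N - 2 → ζ n = Wgen p cn ∧ Wgen p cn ∈ T) := by
    intro n
    by_cases h : 1 ≤ n ∧ n ≤ N - 2
    · obtain ⟨cn, hcn⟩ := hallW n h.1 h.2
      exact ⟨cn, fun _ _ => hcn⟩
    · exact ⟨⟨0, hp.pos⟩, fun h1 h2 => absurd ⟨h1, h2⟩ h⟩
  choose c hc using hcex
  choose P hP using hA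
  choose Q hQ using hB
  have hE : ∀ n, 1 ≤ n → n ≤ N - 2 → ∀ m : Fin t,
      fz (P (m + 1)) = fz (Q (m + (((n-1)*(t-1) : ℕ) : Fin t))) + (fz (c n) + 1) := by
    intro n h1 h2 m
    have e := hC n h1 h2 m
    rw [(hc n h1 h2).1, hQ, hP, wgen_inr] at e
    have h3 := Sum.inl.inj (Option.some.inj e)
    have h4 := congrArg fz h3
    rw [fz_mk hp.pos] at h4
    rw [← h4]
    push_cast
    unfold fz
    ring
  have hKidx : ∀ n : ℕ, (((n*(t-1) : ℕ)) : Fin t) = -((n : ℕ) : Fin t) := by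
    intro n
    rw [Nat.cast_mul, fin_cast_sub_one (by omega)]
    ring
  have hcastsub : ∀ n : ℕ, 1 ≤ n → ((n-1 : ℕ) : Fin t) = (n : Fin t) - 1 := by
    intro n h1
    have h5 : ((n-1) + 1 : ℕ) = n := by omega
    calc ((n-1:ℕ) : Fin t) = ((n-1:ℕ) : Fin t) + 1 - 1 := by ring
      _ = (((n-1)+1 : ℕ) : Fin t) - 1 := by push_cast; ring
      _ = (n : Fin t) - 1 := by rw [h5]
  have hD : ∀ n, 1 ≤ n → n ≤ N - 3 → ∀ i : Fin t,
      fz (Q (i - 1)) = fz (Q i) + ((fz (c n) + 1) - (fz (c (n+1)) + 1)) := by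
    intro n h1 h2 i
    have e1 := hE n h1 (by omega) (i - (((n-1)*(t-1) : ℕ) : Fin t))
    have e2 := hE (n+1) (by omega) (by omega) (i - (((n-1)*(t-1) : ℕ) : Fin t))
    rw [sub_add_cancel] at e1
    have hidx : i - (((n-1)*(t-1) : ℕ) : Fin t) + (((n+1-1)*(t-1) : ℕ) : Fin t) = i - 1 := by
      rw [hKidx (n-1)]
      have he : (n+1-1 : ℕ) = n := by omega
      rw [he, hKidx n, hcastsub n h1]
      ring
    rw [hidx] at e2
    linear_combination e1 - e2
  have hDδ : ∀ n, 1 ≤ n → n ≤ N - 3 →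
      (fz (c n) + 1) - (fz (c (n+1)) + 1) = fz (c 1) - fz (c 2) := by
    intro n h1 h2
    have u1 := hD n h1 h2 0
    have u2 := hD 1 (by omega) (by omega) 0
    linear_combination u2 - u1
  set δ : ZMod p := fz (c 1) - fz (c 2) with hδ_def
  have hdrift : ∀ i : Fin t, fz (Q (i - 1)) = fz (Q i) + δ := by
    intro i
    have := hD 1 (by omega) (by omega) i
    rw [hδ_def]
    linear_combination this
  by_cases hδ : δ = 0
  · have hrot : ∀ m : Fin t, (fun m => fz (Q m)) (m - 1) = (fun m => fz (Q m)) m := by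
      intro m
      simp only
      rw [hdrift, hδ, add_zero]
    have hqc := const_of_rot (fun m => fz (Q m)) hrot m₁ m₂
    exact hbm (by rw [hQ m₁, hQ m₂, fz_inj hqc])
  · apply hbig
    have hγf : ∀ n, 1 ≤ n → n ≤ N - 2 →
        fz (c n) + 1 = (fz (c 1) + 1) - ((n-1 : ℕ) : ZMod p) * δ := by
      intro n h1
      induction n, h1 using Nat.le_induction with
      | base => intro _; norm_num
      | succ n h1 ih =>
        intro h2
        have hstep := hDδ n h1 (by omega)
        have hihn := ih (by omega)
        have hcast : ((n+1-1 : ℕ) : ZMod p) = ((n-1 : ℕ) : ZMod p) + 1 := by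
          have e : (n+1-1 : ℕ) = (n-1) + 1 := by omega
          rw [e]
          push_cast
          ring
        rw [hcast, hδ_def]
        rw [hδ_def] at hihn
        linear_combination hihn - hstep
    have hcinj : ∀ n n', 1 ≤ n → n ≤ p → 1 ≤ n' → n' ≤ p → c n = c n' → n = n' := by
      intro n n' h1 h2 h1' h2' hcc
      have hγn := hγf n h1 (by omega)
      have hγn' := hγf n' h1' (by omega)
      rw [hcc] at hγn
      have h5 : ((n-1 : ℕ) : ZMod p) * δ = ((n'-1 : ℕ) : ZMod p) * δ := by
        linear_combination hγn - hγn'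
      have h6 : ((n-1 : ℕ) : ZMod p) = ((n'-1 : ℕ) : ZMod p) := mul_right_cancel₀ hδ h5
      have h7 : (n-1) % p = (n'-1) % p := by
        have h8 := congrArg ZMod.val h6
        rwa [ZMod.val_natCast, ZMod.val_natCast] at h8
      rw [Nat.mod_eq_of_lt (by omega), Nat.mod_eq_of_lt (by omega)] at h7
      omega
    have hiter : ∀ (k : ℕ) (m : Fin t),
        fz (Q (m - (k : Fin t))) = fz (Q m) + (k : ZMod p) * δ := by
      have := drift_iter (fun m => fz (Q m)) δ (fun k => (k : ZMod p) * δ)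
        (by norm_num) (fun k => by push_cast; ring) hdrift
      exact fun k m => this k m
    have hQs : ∀ w : ZMod p, ∃ m, fz (Q m) = w := by
      intro w
      refine ⟨(0 : Fin t) - ((((w - fz (Q 0)) * δ⁻¹).val : ℕ) : Fin t), ?_⟩
      rw [hiter]
      rw [ZMod.natCast_val, ZMod.cast_id]
      have hinv : δ⁻¹ * δ = 1 := inv_mul_cancel₀ hδ
      rw [mul_assoc, hinv, mul_one]
      ring
    have hPs : ∀ u : Fin p, ∃ m, P m = u := by
      intro u
      obtain ⟨m, hm⟩ := hQs (fz u - (fz (c 1) + 1))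
      refine ⟨m + 1, ?_⟩
      apply fz_inj
      have e := hE 1 (by omega) (by omega) m
      have h01 : (((1-1)*(t-1) : ℕ) : Fin t) = 0 := by norm_num
      rw [h01, add_zero] at e
      rw [e, hm]
      ring
    constructor
    · intro u
      obtain ⟨m, hm⟩ := hPs u
      refine ⟨slam ξ ζ 1 m, hmem 1 m, ?_⟩
      rw [hab m]
      have h9 : (ab m).1 = Sum.inl u := by
        rw [show (ab m).1 = a m from rfl, hP m, hm]
      rw [h9, pte_apply_self]
      simp
    · refine ⟨fun k => c (k.val + 1), ?_, ?_⟩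
      · intro k k' hkk
        have h10 := hcinj (k.val+1) (k'.val+1) (by omega) (by have := k.2; omega)
          (by omega) (by have := k'.2; omega) hkk
        exact Fin.ext (by omega)
      · intro k
        exact (hc (k.val+1) (by omega) (by have := k.2; omega)).2

end core

theorem hbig_holds (p : ℕ) (hp : p.Prime) (v : Fin (2 * p - 1) → PT (Pts p))
    (hv : ∀ i, v i ∈ Sp p) :
    ¬ ((∀ u : Fin p, ∃ f ∈ Subsemigroup.closure (Set.range v), f (Sum.inl u) ≠ none) ∧
       ∃ c : Fin p → Fin p, Function.Injective c ∧
         ∀ k, Wgen p (c k) ∈ Subsemigroup.closure (Set.range v)) := by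
  rintro ⟨hdom, c, hcinj, hcW⟩
  have hTle : Subsemigroup.closure (Set.range v) ≤ Sp p :=
    Subsemigroup.closure_le.mpr (by rintro f ⟨i, rfl⟩; exact hv i)
  have gen_dom : ∀ f ∈ Subsemigroup.closure (Set.range v),
      ∀ x, f x ≠ none → ∃ i, v i x ≠ none := by
    intro f hf
    induction hf using Subsemigroup.closure_induction with
    | mem f hf =>
      obtain ⟨i, rfl⟩ := hf
      exact fun x hx => ⟨i, hx⟩
    | mul f g hf hg ihf ihg =>
      intro x hx
      rw [PT.mul_apply] at hx
      apply ihf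
      intro h0
      rw [h0] at hx
      exact hx rfl
  have gen_W : ∀ f ∈ Subsemigroup.closure (Set.range v), ¬ IsR1 f → f ∈ Set.range v := by
    intro f hf
    induction hf using Subsemigroup.closure_induction with
    | mem f hf => exact fun _ => hf
    | mul f g hf hg ihf ihg =>
      intro hR
      exact absurd (spset_mul_isR1 (sp_le_spset (hTle hf)) (sp_le_spset (hTle hg))) hR
  have hWv : ∀ k : Fin p, ∃ i, v i = Wgen p (c k) := by
    intro k
    obtain ⟨i, hi⟩ := gen_W _ (hcW k) (wgen_not_isR1 hp.two_le (c k))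
    exact ⟨i, hi⟩
  have hDv : ∀ u : Fin p, ∃ i, v i (Sum.inl u) ≠ none := by
    intro u
    obtain ⟨f, hf, hfx⟩ := hdom u
    exact gen_dom f hf _ hfx
  choose gi hgi using hDv
  choose wi hwi using hWv
  have hinj : Function.Injective (Sum.elim gi wi : Fin p ⊕ Fin p → Fin (2*p-1)) := by
    rintro (u | k) (u' | k') h <;> simp only [Sum.elim_inl, Sum.elim_inr] at h
    · have h1 := hgi u
      have h2 := hgi u'
      rw [h] at h1
      rcases sp_le_spset (hv (gi u')) with hr | ⟨d, hd⟩
      · exact congrArg Sum.inl (Sum.inl.inj (hr _ _ h1 h2))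
      · rw [hd] at h1
        exact absurd (wgen_inl d u) h1
    · have h1 := hgi u
      rw [h, hwi k'] at h1
      exact absurd (wgen_inl _ u) h1
    · have h1 := hgi u'
      rw [← h, hwi k] at h1
      exact absurd (wgen_inl _ u') h1
    · have he : Wgen p (c k) = Wgen p (c k') := by rw [← hwi k, ← hwi k', h]
      have e := congrFun he (Sum.inr (⟨0, hp.pos⟩ : Fin p))
      rw [wgen_inr, wgen_inr] at e
      have h3 := Sum.inl.inj (Option.some.inj e)
      have h4 := congrArg fz h3
      rw [fz_mk hp.pos, fz_mk hp.pos] at h4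
      push_cast at h4
      have h5 : fz (c k) = fz (c k') := by
        unfold fz
        linear_combination h4
      rw [hcinj (fz_inj h5)]
  have hcard := Fintype.card_le_of_injective _ hinj
  simp only [Fintype.card_sum, Fintype.card_fin] at hcard
  have := hp.two_le
  omega

/-- For any prime `p`, the semigroup `S_p` (generated by the `2p` elements
`X_{p,1}, …, X_{p,p}, W_{p,1}, …, W_{p,p}`) is not strongly Mal'cev nilpotent, while every
subsemigroup of `S_p` generated by at most `2p − 1` elements is strongly Mal'cev
nilpotent. -/
theorem stmt12 (p : ℕ) (hp : p.Prime) :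
    ¬ StronglyMalcevNilpotent (Sp p) ∧
      ∀ v : Fin (2 * p - 1) → PT (Pts p), (∀ i, v i ∈ Sp p) →
        StronglyMalcevNilpotent (Subsemigroup.closure (Set.range v)) := by
  constructor
  · rintro ⟨n, hn, hs⟩
    have h := hs p hp.two_le (fun i => (⟨Xgen p i, xgen_mem i⟩ : Sp p))
      (fun k => ((⟨Wgen p ⟨k % p, Nat.mod_lt _ hp.pos⟩, wgen_mem _⟩ : Sp p) : WithOne (Sp p)))
      ⟨0, hp.pos⟩ ⟨1, hp.two_le⟩
    set F : WithOne (Sp p) →* PT (Pts p) := WithOne.lift (MulMemClass.subtype (Sp p)) with hF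
    have h2 := congrArg F h
    rw [slam_hom F (map_mul F), slam_hom F (map_mul F)] at h2
    simp only [hF, WithOne.lift_coe] at h2
    have hx : (fun k : Fin p => (MulMemClass.subtype (Sp p)) (⟨Xgen p k, xgen_mem k⟩ : Sp p))
        = fun m => Xgen p m := rfl
    have hz : (fun k : ℕ => (MulMemClass.subtype (Sp p))
          (⟨Wgen p ⟨k % p, Nat.mod_lt _ hp.pos⟩, wgen_mem _⟩ : Sp p))
        = fun k => Wgen p ⟨k % p, Nat.mod_lt _ hp.pos⟩ := rfl
    rw [hx, hz] at h2
    rw [part1_slam p hp n, part1_slam p hp n] at h2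
    have h3 := congrFun h2 (Sum.inl ⟨0, hp.pos⟩)
    rw [pte_apply_self, pte_apply_ne] at h3
    · exact nomatch h3
    · simp
  · intro v hv
    refine ⟨p + 4, by omega, ?_⟩
    intro t ht x z i j
    haveI : NeZero t := ⟨by omega⟩
    have hTle : Subsemigroup.closure (Set.range v) ≤ Sp p :=
      Subsemigroup.closure_le.mpr (by rintro f ⟨i', rfl⟩; exact hv i')
    set F : WithOne (Subsemigroup.closure (Set.range v)) →* PT (Pts p) :=
      WithOne.lift (MulMemClass.subtype _) with hF
    have hone_or : ∀ w : WithOne (Subsemigroup.closure (Set.range v)),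
        w = 1 ∨ ∃ s : Subsemigroup.closure (Set.range v),
          w = (s : WithOne (Subsemigroup.closure (Set.range v))) := by
      intro w
      induction w using WithOne.recOneCoe with
      | one => exact Or.inl rfl
      | coe s => exact Or.inr ⟨s, rfl⟩
    have hcoe : ∀ n (i : Fin t), ∃ s : Subsemigroup.closure (Set.range v),
        slam (fun k => ((x k : Subsemigroup.closure (Set.range v)) :
          WithOne (Subsemigroup.closure (Set.range v)))) z n i
          = (s : WithOne (Subsemigroup.closure (Set.range v))) := by
      intro n
      induction n with
      | zero => exact fun i => ⟨x i, rfl⟩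
      | succ n ih =>
        intro i
        rw [slam_succ]
        apply foldl_inv (P := fun w => ∃ s : Subsemigroup.closure (Set.range v),
          w = (s : WithOne (Subsemigroup.closure (Set.range v))))
        · intro acc jj hacc
          obtain ⟨s, rfl⟩ := hacc
          obtain ⟨s', hs'⟩ := ih (cyc i (jj+1))
          rcases hone_or (z n) with h1 | ⟨w, hw⟩
          · rw [h1, mul_one, hs', ← WithOne.coe_mul]
            exact ⟨s * s', rfl⟩
          · rw [hw, hs', ← WithOne.coe_mul, ← WithOne.coe_mul]
            exact ⟨s * w * s', rfl⟩
        · exact ih i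
    obtain ⟨s, hs⟩ := hcoe (p+4) i
    obtain ⟨s', hs'⟩ := hcoe (p+4) j
    rw [hs, hs', WithOne.coe_inj]
    apply Subtype.ext
    have h1 := congrArg F hs
    have h2 := congrArg F hs'
    rw [slam_hom F (map_mul F), WithOne.lift_coe] at h1 h2
    have hxk : ∀ k : Fin t, F (((x k : Subsemigroup.closure (Set.range v)) :
        WithOne (Subsemigroup.closure (Set.range v)))) = ((x k : PT (Pts p))) :=
      fun k => WithOne.lift_coe _ _
    have hξ' : ∀ k : Fin t, F (((x k : Subsemigroup.closure (Set.range v)) :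
        WithOne (Subsemigroup.closure (Set.range v)))) ∈ Subsemigroup.closure (Set.range v) := by
      intro k
      rw [hxk k]
      exact (x k).2
    have hζ' : ∀ k : ℕ, F (z k) = 1 ∨ F (z k) ∈ Subsemigroup.closure (Set.range v) := by
      intro k
      rcases hone_or (z k) with hzz | ⟨w, hw⟩
      · left
        rw [hzz, map_one]
      · right
        rw [hw, WithOne.lift_coe]
        exact w.2
    have hcore := core p hp ht (Subsemigroup.closure (Set.range v))
      (fun f hf => sp_le_spset (hTle hf))
      (fun k => F (((x k : Subsemigroup.closure (Set.range v)) :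
        WithOne (Subsemigroup.closure (Set.range v)))))
      hξ' (fun k => F (z k)) hζ' (hbig_holds p hp v hv) i j
    exact h1.symm.trans (hcore.trans h2)


end SMN
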